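/- For every s ∈ ℂ with Re s > 1 there exists a constant C > 0 such that |E(z;s)| ≤ C · (Im z)^{Re s} for every z ∈ ℍ with Im z ≥ 1 (moderate growth of the Eisenstein series in the cusp). -/

import Mathlib

/-- The summand of the Eisenstein series: `(Im z)^s / |m z + n|^{2s}`. -/
noncomputable def eisTerm (s : ℂ) (z : ℂ) (p : ℤ × ℤ) : ℂ :=
  (z.im : ℂ) ^ s / (((‖(p.1 : ℂ) * z + (p.2 : ℂ)‖ : ℝ) : ℂ)) ^ (2 * s)

/-- The Eisenstein series `E(z; s)`, summed over coprime pairs of integers. -/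
noncomputable def eis (s : ℂ) (z : ℂ) : ℂ :=
  ∑' p : {p : ℤ × ℤ // Int.gcd p.1 p.2 = 1}, eisTerm s z (p : ℤ × ℤ)

/-- `mz+n ≠ 0` for coprime `(m,n)` and `z` in the upper half plane. -/
lemma aux_ne (z : ℂ) (hz : 0 < z.im) (p : ℤ × ℤ) (hp : Int.gcd p.1 p.2 = 1) :
    ((p.1 : ℂ) * z + (p.2 : ℂ)) ≠ 0 := by
  intro h
  have him : ((p.1 : ℂ) * z + (p.2 : ℂ)).im = (p.1 : ℝ) * z.im := by
    simp [Complex.add_im, Complex.mul_im]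
  rw [h] at him
  have h1 : (p.1 : ℝ) = 0 := by
    rcases mul_eq_zero.mp him.symm with h' | h'
    · exact h'
    · exact absurd h' hz.ne'
  have hp1 : p.1 = 0 := by exact_mod_cast h1
  rw [hp1] at h hp
  simp at h
  have hp2 : p.2 = 0 := by exact_mod_cast h
  rw [hp2] at hp
  simp at hp

lemma aux_sq (z : ℂ) (p : ℤ × ℤ) :
    ‖(p.1 : ℂ) * z + (p.2 : ℂ)‖ ^ 2
      = ((p.1 : ℝ) * z.re + (p.2 : ℝ)) ^ 2 + ((p.1 : ℝ) * z.im) ^ 2 := by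
  rw [Complex.sq_norm, Complex.normSq_apply]
  simp [Complex.add_re, Complex.add_im, Complex.mul_re, Complex.mul_im]
  ring

/-- Key geometric lower bound: `|mz+n|² ≥ ((n + round(m·Re z))² + m²)/4` for `Im z ≥ 1`. -/
lemma aux_key (z : ℂ) (hz : 1 ≤ z.im) (p : ℤ × ℤ) :
    (((p.2 + round ((p.1 : ℝ) * z.re) : ℤ) : ℝ) ^ 2 + (p.1 : ℝ) ^ 2) / 4
      ≤ ‖(p.1 : ℂ) * z + (p.2 : ℂ)‖ ^ 2 := by
  rw [aux_sq]
  set t : ℝ := (p.1 : ℝ) * z.re with ht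
  set J : ℤ := p.2 + round t with hJ
  have hround : |t - round t| ≤ 1 / 2 := abs_sub_round t
  have him : ((p.1 : ℝ)) ^ 2 ≤ ((p.1 : ℝ) * z.im) ^ 2 := by
    have h2 : (1 : ℝ) ≤ z.im ^ 2 := by nlinarith
    calc ((p.1 : ℝ)) ^ 2 = (p.1 : ℝ) ^ 2 * 1 := by ring
      _ ≤ (p.1 : ℝ) ^ 2 * z.im ^ 2 := mul_le_mul_of_nonneg_left h2 (sq_nonneg _)
      _ = ((p.1 : ℝ) * z.im) ^ 2 := by ring
  rcases eq_or_ne J 0 with hJ0 | hJ0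
  · rw [hJ0]
    simp only [Int.cast_zero]
    nlinarith [sq_nonneg (t + (p.2 : ℝ))]
  · have hJ1 : (1 : ℝ) ≤ |(J : ℝ)| := by
      rw [← Int.cast_abs]
      exact_mod_cast Int.one_le_abs hJ0
    have hre : |(J : ℝ)| - 1 / 2 ≤ |t + (p.2 : ℝ)| := by
      have : t + (p.2 : ℝ) = (J : ℝ) + (t - round t) := by
        push_cast [hJ]; ring
      rw [this]
      have htri : |(J : ℝ)| ≤ |(J : ℝ) + (t - round t)| + |t - round t| := by
        have h := abs_add_le ((J : ℝ) + (t - round t)) (-(t - round t))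
        have he : (J : ℝ) + (t - round t) + -(t - round t) = (J : ℝ) := by ring
        rw [he, abs_neg] at h
        exact h
      linarith
    have h1 : ((J : ℝ)) ^ 2 / 4 ≤ (t + (p.2 : ℝ)) ^ 2 := by
      have h2 : (|(J : ℝ)| - 1 / 2) ^ 2 ≤ |t + (p.2 : ℝ)| ^ 2 := by
        apply sq_le_sq' <;> nlinarith [abs_nonneg (t + (p.2 : ℝ))]
      rw [sq_abs] at h2
      nlinarith [sq_abs (J : ℝ)]
    nlinarith

open EisensteinSeries in
/-- The comparison series `Σ (a²+b²)^{-σ}` over `ℤ²` is summable for `σ > 1`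
(the term at `(0,0)` is `0` by junk-value conventions for `rpow`). -/
lemma aux_summable {σ : ℝ} (hσ : 1 < σ) :
    Summable (fun q : ℤ × ℤ => ((q.1 : ℝ) ^ 2 + (q.2 : ℝ) ^ 2) ^ (-σ)) := by
  have hk : (2 : ℝ) < 2 * σ := by linarith
  have h0 : Summable fun x : Fin 2 → ℤ => ‖x‖ ^ (-(2 * σ)) :=
    summable_one_div_norm_rpow hk
  have h1 : Summable fun q : ℤ × ℤ => ‖(finTwoArrowEquiv ℤ).symm q‖ ^ (-(2 * σ)) :=
    ((finTwoArrowEquiv ℤ).symm.summable_iff (f := fun x : Fin 2 → ℤ => ‖x‖ ^ (-(2 * σ)))).mpr h0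
  apply h1.of_nonneg_of_le (fun q => Real.rpow_nonneg (by positivity) _)
  intro q
  set x : Fin 2 → ℤ := (finTwoArrowEquiv ℤ).symm q with hx
  have hx0 : x 0 = q.1 := rfl
  have hx1 : x 1 = q.2 := rfl
  rcases eq_or_ne q (0, 0) with rfl | hq
  · simp only [Int.cast_zero]
    rw [show ((0:ℝ)^2 + (0:ℝ)^2) = 0 by norm_num, Real.zero_rpow (by linarith)]
    exact Real.rpow_nonneg (norm_nonneg _) _
  · have hxne : x ≠ 0 := by
      intro h
      apply hq
      have h0' := congrFun h 0
      have h1' := congrFun h 1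
      rw [hx0] at h0'; rw [hx1] at h1'
      exact Prod.ext h0' h1'
    have hxpos : 0 < ‖x‖ := norm_pos_iff.mpr hxne
    have hnorm : ‖x‖ ^ (2:ℕ) ≤ (q.1 : ℝ) ^ 2 + (q.2 : ℝ) ^ 2 := by
      have : ‖x‖ = max |(q.1 : ℝ)| |(q.2 : ℝ)| := by
        rw [norm_eq_max_natAbs, hx0, hx1]
        push_cast [Nat.cast_natAbs]
        rfl
      rw [this]
      rcases max_choice |(q.1 : ℝ)| |(q.2 : ℝ)| with h | h <;> rw [h] <;>
        nlinarith [sq_abs (q.1 : ℝ), sq_abs (q.2 : ℝ), sq_nonneg (q.1 : ℝ), sq_nonneg (q.2 : ℝ)]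
    calc ((q.1 : ℝ) ^ 2 + (q.2 : ℝ) ^ 2) ^ (-σ) ≤ (‖x‖ ^ (2:ℕ)) ^ (-σ) :=
          Real.rpow_le_rpow_of_nonpos (by positivity) hnorm (by linarith)
      _ = ‖x‖ ^ (-(2 * σ)) := by
          rw [← Real.rpow_natCast ‖x‖ 2, ← Real.rpow_mul (norm_nonneg x)]
          norm_num

lemma aux_norm (s z : ℂ) (p : ℤ × ℤ) (hz : 0 < z.im)
    (hne : (p.1 : ℂ) * z + (p.2 : ℂ) ≠ 0) :
    ‖eisTerm s z p‖
      = z.im ^ s.re * (‖(p.1 : ℂ) * z + (p.2 : ℂ)‖ ^ 2) ^ (-s.re) := by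
  set r : ℝ := ‖(p.1 : ℂ) * z + (p.2 : ℂ)‖ with hr
  have hrpos : 0 < r := by
    rw [hr]; exact (norm_pos_iff.mpr hne)
  rw [eisTerm, norm_div, Complex.norm_cpow_eq_rpow_re_of_pos hz,
    Complex.norm_cpow_eq_rpow_re_of_pos hrpos]
  have h2s : (2 * s).re = 2 * s.re := by simp [Complex.mul_re]
  rw [h2s]
  have : (r ^ 2) ^ (-s.re) = (r ^ (2 * s.re))⁻¹ := by
    rw [← Real.rpow_natCast r 2, ← Real.rpow_mul hrpos.le, ← Real.rpow_neg hrpos.le]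
    norm_num
  rw [this, div_eq_mul_inv]

theorem stmt_12 (s : ℂ) (hs : 1 < s.re) :
    ∃ C : ℝ, 0 < C ∧ ∀ z : ℂ, 0 < z.im → 1 ≤ z.im →
      ‖eis s z‖ ≤ C * z.im ^ s.re := by
  set σ : ℝ := s.re with hσdef
  have hg : Summable (fun q : ℤ × ℤ => ((q.1 : ℝ) ^ 2 + (q.2 : ℝ) ^ 2) ^ (-σ)) :=
    aux_summable hs
  set g : ℤ × ℤ → ℝ := fun q => ((q.1 : ℝ) ^ 2 + (q.2 : ℝ) ^ 2) ^ (-σ) with hgdef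
  have hgnn : ∀ q, 0 ≤ g q := fun q => Real.rpow_nonneg (by positivity) _
  set K : ℝ := ∑' q : ℤ × ℤ, g q with hKdef
  have hK0 : 0 ≤ K := tsum_nonneg hgnn
  have h4pos : (0:ℝ) < (4:ℝ) ^ σ := Real.rpow_pos_of_pos (by norm_num) _
  refine ⟨(4:ℝ) ^ σ * K + 1, by nlinarith, ?_⟩
  intro z hz0 hz1
  set i : {p : ℤ × ℤ // Int.gcd p.1 p.2 = 1} → ℤ × ℤ :=
    fun p => (p.1.1, p.1.2 + round ((p.1.1 : ℝ) * z.re)) with hidef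
  have hinj : Function.Injective i := by
    intro a b h
    simp only [hidef, Prod.mk.injEq] at h
    obtain ⟨h1, h2⟩ := h
    rw [h1] at h2
    exact Subtype.ext (Prod.ext h1 (by omega))
  have hY : (0:ℝ) ≤ z.im ^ σ := Real.rpow_nonneg hz0.le _
  have hterm : ∀ p : {p : ℤ × ℤ // Int.gcd p.1 p.2 = 1},
      ‖eisTerm s z p.1‖ ≤ (z.im ^ σ * (4:ℝ) ^ σ) * g (i p) := by
    intro p
    have hne := aux_ne z hz0 p.1 p.2
    rw [aux_norm s z p.1 hz0 hne]
    rw [mul_assoc]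
    apply mul_le_mul_of_nonneg_left ?_ hY
    have hkey := aux_key z hz1 p.1
    set J : ℤ := p.1.2 + round ((p.1.1 : ℝ) * z.re) with hJdef
    have hpos : (0:ℝ) < ((J : ℝ) ^ 2 + (p.1.1 : ℝ) ^ 2) / 4 := by
      rcases eq_or_ne p.1.1 0 with hm | hm
      · have hn : p.1.2 ≠ 0 := by
          intro hn
          have := p.2
          rw [hm, hn] at this
          simp at this
        have hJ : (J : ℝ) ≠ 0 := by
          rw [hJdef, hm]
          push_cast
          simp only [Int.cast_zero, zero_mul, round_zero, add_zero]
          exact_mod_cast hn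
        have : (0:ℝ) < (J : ℝ) ^ 2 := by positivity
        nlinarith [sq_nonneg ((p.1.1 : ℝ))]
      · have hm' : ((p.1.1 : ℝ)) ≠ 0 := Int.cast_ne_zero.mpr hm
        have : (0:ℝ) < ((p.1.1 : ℝ)) ^ 2 := by positivity
        nlinarith [sq_nonneg ((J : ℝ))]
    calc (‖(p.1.1 : ℂ) * z + (p.1.2 : ℂ)‖ ^ 2) ^ (-σ)
        ≤ (((J : ℝ) ^ 2 + (p.1.1 : ℝ) ^ 2) / 4) ^ (-σ) :=
          Real.rpow_le_rpow_of_nonpos hpos hkey (by linarith)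
      _ = (4:ℝ) ^ σ * g (i p) := by
          rw [hgdef]
          simp only [hidef]
          rw [div_eq_mul_inv, Real.mul_rpow (by nlinarith) (by norm_num),
            ← Real.rpow_neg_one (4:ℝ), ← Real.rpow_mul (by norm_num : (0:ℝ) ≤ 4),
            show (-1:ℝ) * (-σ) = σ by ring, ← hJdef, add_comm ((J:ℝ)^2), mul_comm]
  have hgi : Summable (fun p : {p : ℤ × ℤ // Int.gcd p.1 p.2 = 1} => g (i p)) :=
    hg.comp_injective hinj
  have hF : Summable (fun p : {p : ℤ × ℤ // Int.gcd p.1 p.2 = 1} =>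
      (z.im ^ σ * (4:ℝ) ^ σ) * g (i p)) := hgi.mul_left _
  have hsum_norm : Summable (fun p : {p : ℤ × ℤ // Int.gcd p.1 p.2 = 1} =>
      ‖eisTerm s z p.1‖) := by
    apply hF.of_nonneg_of_le (fun p => norm_nonneg _)
    intro p
    exact hterm p
  have hstep : ‖eis s z‖ ≤ ∑' p : {p : ℤ × ℤ // Int.gcd p.1 p.2 = 1},
      ‖eisTerm s z p.1‖ := by
    rw [eis]
    exact norm_tsum_le_tsum_norm hsum_norm
  have hstep2 : (∑' p : {p : ℤ × ℤ // Int.gcd p.1 p.2 = 1}, ‖eisTerm s z p.1‖)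
      ≤ ∑' p : {p : ℤ × ℤ // Int.gcd p.1 p.2 = 1}, (z.im ^ σ * (4:ℝ) ^ σ) * g (i p) := by
    apply Summable.tsum_le_tsum _ hsum_norm hF
    intro p
    exact hterm p
  have hstep3 : (∑' p : {p : ℤ × ℤ // Int.gcd p.1 p.2 = 1},
      (z.im ^ σ * (4:ℝ) ^ σ) * g (i p)) ≤ (z.im ^ σ * (4:ℝ) ^ σ) * K := by
    rw [tsum_mul_left]
    apply mul_le_mul_of_nonneg_left _ (by positivity)
    exact Summable.tsum_le_tsum_of_inj i hinj (fun c _ => hgnn c) (fun p => le_rfl) hgi hg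
  have : ‖eis s z‖ ≤ (z.im ^ σ * (4:ℝ) ^ σ) * K :=
    le_trans hstep (le_trans hstep2 hstep3)
  calc ‖eis s z‖ ≤ (z.im ^ σ * (4:ℝ) ^ σ) * K := this
    _ = ((4:ℝ) ^ σ * K) * z.im ^ σ := by ring
    _ ≤ ((4:ℝ) ^ σ * K + 1) * z.im ^ σ := by nlinarith
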